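/- arXiv:1602.06631 — 2 statements merged into one kernel-verified Lean document; each statement's English description precedes it below -/
import Mathlib

section
/- Let (A, M) be a Schur pair and S = End_A(M). Then the opposite algebra A^op is isomorphic to End_S(M), where M is viewed as a left S-module. (Double centraliser property.) -/
/-- **Double centraliser property.** Let `(A, M)` be a Schur pair and
`S = End_A(M)`.  Then `A^op ≅ End_S(M)`, where `M` is viewed as a left `S`-module by
evaluation.  (Right `A`-modules are modelled as `Aᵐᵒᵖ`-modules, so `A^op = Aᵐᵒᵖ`.) -/
theorem double_centraliser
    (K A M : Type) [Field K] [Ring A] [Algebra K A] [FiniteDimensional K A]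
    [AddCommGroup M] [Module Aᵐᵒᵖ M] [Module K M] [IsScalarTower K Aᵐᵒᵖ M]
    [FiniteDimensional K M] [FaithfulSMul Aᵐᵒᵖ M]
    (hA : Module.Injective Aᵐᵒᵖ A) :
    Nonempty (Aᵐᵒᵖ ≃+* Module.End (Module.End Aᵐᵒᵖ M) M) := by
  classical
  set n := Module.finrank K M with hn
  let b : Module.Basis (Fin n) K M := Module.finBasis K M
  -- the embedding Aᵐᵒᵖ → M^n,  r ↦ (r • b i)
  let f : Aᵐᵒᵖ →ₗ[Aᵐᵒᵖ] (Fin n → M) :=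
    LinearMap.pi fun i => LinearMap.toSpanSingleton Aᵐᵒᵖ M (b i)
  -- for each r, x ↦ r • x is K-linear
  let mu : Aᵐᵒᵖ → (M →ₗ[K] M) := fun r =>
    { toFun := fun x => r • x
      map_add' := smul_add r
      map_smul' := fun k x => smul_comm r k x }
  have finj : Function.Injective f := by
    intro r r' h
    apply FaithfulSMul.eq_of_smul_eq_smul (M := Aᵐᵒᵖ) (α := M)
    intro x
    have hmu : mu r = mu r' := by
      apply b.ext
      intro i
      exact congrFun h i
    exact congrFun (congrArg (fun g : M →ₗ[K] M => (g : M → M)) hmu) x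
  -- A ≃ₗ[Aᵐᵒᵖ] Aᵐᵒᵖ
  let e : A ≃ₗ[Aᵐᵒᵖ] Aᵐᵒᵖ :=
    { MulOpposite.opAddEquiv with
      map_smul' := fun r a => by simp [MulOpposite.smul_eq_mul_unop] }
  -- splitting of f, using injectivity of A
  obtain ⟨h, hh⟩ := hA.out f finj e.symm.toLinearMap
  let π : (Fin n → M) →ₗ[Aᵐᵒᵖ] Aᵐᵒᵖ := e.toLinearMap ∘ₗ h
  have hπ : ∀ r : Aᵐᵒᵖ, π (f r) = r := by
    intro r
    simp only [π, LinearMap.comp_apply, hh]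
    exact e.apply_symm_apply r
  -- the canonical ring hom
  let ρ : Aᵐᵒᵖ →+* Module.End (Module.End Aᵐᵒᵖ M) M :=
    Module.toModuleEnd (Module.End Aᵐᵒᵖ M) M
  have ρinj : Function.Injective ρ := by
    intro r r' hr
    apply FaithfulSMul.eq_of_smul_eq_smul (M := Aᵐᵒᵖ) (α := M)
    intro x
    exact congrFun (congrArg (fun g : Module.End (Module.End Aᵐᵒᵖ M) M => (g : M → M)) hr) x
  have ρsurj : Function.Surjective ρ := by
    intro φ
    refine ⟨π (fun i => φ (b i)), ?_⟩
    apply LinearMap.ext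
    intro x
    show π (fun i => φ (b i)) • x = φ x
    -- gx : r ↦ r • x
    let gx : Aᵐᵒᵖ →ₗ[Aᵐᵒᵖ] M := LinearMap.toSpanSingleton Aᵐᵒᵖ M x
    have key : ∀ p : Fin n → M, φ (gx (π p)) = gx (π (fun i => φ (p i))) := by
      intro p
      have hp : p = ∑ i, Pi.single i (p i) := (Finset.univ_sum_single p).symm
      have hp' : (fun i => φ (p i)) = ∑ i, Pi.single i (φ (p i)) :=
        (Finset.univ_sum_single _).symm
      rw [hp']
      conv_lhs => rw [hp]
      simp only [map_sum]
      refine Finset.sum_congr rfl fun i _ => ?_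
      -- s : M →ₗ[Aᵐᵒᵖ] M
      let s : M →ₗ[Aᵐᵒᵖ] M := gx ∘ₗ π ∘ₗ LinearMap.single Aᵐᵒᵖ (fun _ : Fin n => M) i
      have := φ.map_smul s (p i)
      simpa [s, Module.End.smul_def, LinearMap.comp_apply] using this
    have h1 : φ (gx (π (f 1))) = gx (π (fun i => φ (f 1 i))) := key (f 1)
    have hf1 : ∀ i, f 1 i = b i := fun i => one_smul _ _
    rw [hπ 1] at h1
    have hgx1 : gx 1 = x := one_smul _ _
    rw [hgx1] at h1
    simp only [hf1] at h1
    exact (h1.symm.trans rfl)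
  exact ⟨RingEquiv.ofBijective ρ ⟨ρinj, ρsurj⟩⟩
end

section
/- Let (A, M) be a Schur pair with S = End_A(M). Then M is projective as a left S-module. -/
/-- Let `(A, M)` be a Schur pair with `S = End_A(M)`.  Then `M` is
projective as a left `S`-module (with `S` acting by evaluation).  (Right `A`-modules are
modelled as `Aᵐᵒᵖ`-modules.) -/
theorem tensor_space_projective
    (K A M : Type) [Field K] [Ring A] [Algebra K A] [FiniteDimensional K A]
    [AddCommGroup M] [Module Aᵐᵒᵖ M] [Module K M] [IsScalarTower K Aᵐᵒᵖ M]
    [FiniteDimensional K M] [FaithfulSMul Aᵐᵒᵖ M]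
    (hA : Module.Injective Aᵐᵒᵖ A) :
    Module.Projective (Module.End Aᵐᵒᵖ M) M := by
  classical
  set S := Module.End Aᵐᵒᵖ M
  set n := Module.finrank K M
  set b : Module.Basis (Fin n) K M := Module.finBasis K M
  -- the embedding A → Mⁿ, a ↦ (b j • a)
  let i : A →ₗ[Aᵐᵒᵖ] (Fin n → M) :=
    { toFun := fun a j => MulOpposite.op a • b j
      map_add' := by
        intro x y; funext j
        simp [MulOpposite.op_add, add_smul]
      map_smul' := by
        intro c x; funext j
        show MulOpposite.op (c • x) • b j = (c • fun j => MulOpposite.op x • b j) j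
        have : MulOpposite.op (c • x) = c * MulOpposite.op x := by
          rw [MulOpposite.smul_eq_mul_unop, MulOpposite.op_mul, MulOpposite.op_unop]
        simp only [this, mul_smul, Pi.smul_apply] }
  have hi : Function.Injective i := by
    rw [injective_iff_map_eq_zero]
    intro a ha
    have h1 : ∀ m : M, MulOpposite.op a • m = (0 : Aᵐᵒᵖ) • m := by
      intro m
      have hb : ∀ j, MulOpposite.op a • b j = 0 := fun j => congrFun ha j
      have : ∀ m : M, m ∈ Submodule.span K (Set.range b) →
          MulOpposite.op a • m = 0 := by
        intro m hm
        induction hm using Submodule.span_induction with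
        | mem x hx => obtain ⟨j, rfl⟩ := hx; exact hb j
        | zero => simp
        | add x y _ _ hx hy => rw [smul_add, hx, hy, add_zero]
        | smul c x _ hx =>
            rw [← smul_comm, hx, smul_zero]
      rw [zero_smul]
      exact this m (by rw [b.span_eq]; trivial)
    have := eq_of_smul_eq_smul (M := Aᵐᵒᵖ) (α := M) h1
    simpa using this
  obtain ⟨h, hh⟩ := hA.out i hi LinearMap.id
  -- section σ : M → Sⁿ
  let σm : M → Fin n → S := fun m j =>
    { toFun := fun x => MulOpposite.op (h (Pi.single j x)) • m
      map_add' := by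
        intro x y
        rw [← add_smul, ← MulOpposite.op_add, ← map_add, ← Pi.single_add]
      map_smul' := by
        intro c x
        show MulOpposite.op (h (Pi.single j (c • x))) • m
            = c • (MulOpposite.op (h (Pi.single j x)) • m)
        have h2 : (Pi.single j (c • x) : Fin n → M) = c • (Pi.single j x : Fin n → M) := by
          funext k
          by_cases hk : k = j
          · subst hk; simp
          · simp [Pi.single_eq_of_ne hk]
        have h3 : MulOpposite.op (c • h ((Pi.single j x : Fin n → M)))
            = c * MulOpposite.op (h (Pi.single j x)) := by
          rw [MulOpposite.smul_eq_mul_unop, MulOpposite.op_mul, MulOpposite.op_unop]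
        rw [h2, map_smul, h3, mul_smul] }
  let σ : M →ₗ[S] (Fin n → S) :=
    { toFun := σm
      map_add' := by
        intro x y; funext j; ext z
        show MulOpposite.op (h (Pi.single j z)) • (x + y)
          = ((σm x + σm y) j) z
        rw [smul_add]; rfl
      map_smul' := by
        intro s x; funext j; ext z
        show MulOpposite.op (h (Pi.single j z)) • (s • x) = ((s • σm x) j) z
        exact (map_smul s (MulOpposite.op (h (Pi.single j z))) x).symm }
  let p : (Fin n → S) →ₗ[S] M :=
    { toFun := fun f => ∑ j, f j (b j)
      map_add' := by
        intro f g
        have : ∀ j : Fin n, ((f + g) j) (b j) = (f j) (b j) + (g j) (b j) := fun j => rfl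
        simp only [this, Finset.sum_add_distrib]
      map_smul' := by
        intro s f
        show ∑ j, (s * f j) (b j) = s • ∑ j, f j (b j)
        rw [Module.End.smul_def, map_sum]
        rfl }
  refine Module.Projective.of_split σ p ?_
  ext m
  show ∑ j, (σm m j) (b j) = m
  have e1 : ∀ j : Fin n, (σm m j) (b j) = MulOpposite.op (h (Pi.single j (b j))) • m :=
    fun j => rfl
  have e2 : (∑ j, (Pi.single j (b j) : Fin n → M)) = i 1 := by
    rw [Finset.univ_sum_single (fun j => (b j : M))]
    funext j
    show b j = MulOpposite.op (1 : A) • b j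
    rw [MulOpposite.op_one, one_smul]
  calc ∑ j, (σm m j) (b j)
      = ∑ j, MulOpposite.op (h (Pi.single j (b j))) • m := by
        exact Finset.sum_congr rfl fun j _ => e1 j
    _ = MulOpposite.op (h (∑ j, (Pi.single j (b j) : Fin n → M))) • m := by
        rw [map_sum, Finset.op_sum, Finset.sum_smul]
    _ = m := by rw [e2, hh, LinearMap.id_apply, MulOpposite.op_one, one_smul]
end
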